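/- The supremum over z ∈ ℂ of |z³ − 1/√8| / (1 + |z|²)² equals 1/√8. -/

import Mathlib

/-- The supremum over `z ∈ ℂ` of `|z³ − 1/√8| / (1 + |z|²)²`
equals `1/√8` (the bound holds for all `z` and is attained, e.g. at `z = 0`). -/
theorem stmt_6 :
    IsGreatest
      {r : ℝ | ∃ z : ℂ,
        r = ‖z ^ 3 - (Real.sqrt 8 : ℂ)⁻¹‖ / (1 + ‖z‖ ^ 2) ^ 2}
      (1 / Real.sqrt 8) := by
  have ha0 : (0:ℝ) < Real.sqrt 8 := Real.sqrt_pos.mpr (by norm_num)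
  have ha : Real.sqrt 8 ^ 2 = 8 := Real.sq_sqrt (by norm_num)
  constructor
  · exact ⟨0, by
      simp [norm_inv, Complex.norm_real, abs_of_pos ha0]⟩
  · rintro r ⟨z, rfl⟩
    set s := ‖z‖ with hs
    have hs0 : 0 ≤ s := norm_nonneg z
    have habs : ‖z ^ 3 - (Real.sqrt 8 : ℂ)⁻¹‖ ≤ s ^ 3 + (Real.sqrt 8)⁻¹ := by
      calc ‖z ^ 3 - (Real.sqrt 8 : ℂ)⁻¹‖
          ≤ ‖z ^ 3‖ + ‖(Real.sqrt 8 : ℂ)⁻¹‖ :=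
            norm_sub_le _ _
        _ = s ^ 3 + (Real.sqrt 8)⁻¹ := by
            simp [hs, norm_pow, norm_inv, Complex.norm_real, abs_of_pos ha0]
    have hden : (0:ℝ) < (1 + s ^ 2) ^ 2 := by positivity
    rw [div_le_div_iff₀ hden (by positivity)]
    have key : (s ^ 3 + (Real.sqrt 8)⁻¹) * Real.sqrt 8 ≤ (1 + s ^ 2) ^ 2 := by
      have h2 : Real.sqrt 8 = Real.sqrt 2 * 2 := by
        rw [show (8:ℝ) = 2 * 2^2 by norm_num, Real.sqrt_mul (by norm_num),
          Real.sqrt_sq (by norm_num)]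
      have h2' : Real.sqrt 2 ^ 2 = 2 := Real.sq_sqrt (by norm_num)
      have hineq : 0 ≤ s ^ 2 * (s - Real.sqrt 2) ^ 2 := by positivity
      have expand : s ^ 2 * (s - Real.sqrt 2) ^ 2
          = s ^ 4 - 2 * Real.sqrt 2 * s ^ 3 + 2 * s ^ 2 := by
        have : s ^ 2 * (s - Real.sqrt 2) ^ 2
            = s ^ 4 - 2 * Real.sqrt 2 * s ^ 3 + Real.sqrt 2 ^ 2 * s ^ 2 := by ring
        rw [this, h2']
      rw [add_mul, inv_mul_cancel₀ (ne_of_gt ha0), h2]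
      nlinarith [hineq, expand]
    calc ‖z ^ 3 - (Real.sqrt 8 : ℂ)⁻¹‖ * Real.sqrt 8
        ≤ (s ^ 3 + (Real.sqrt 8)⁻¹) * Real.sqrt 8 :=
          mul_le_mul_of_nonneg_right habs ha0.le
      _ ≤ (1 + s ^ 2) ^ 2 := key
      _ = 1 * (1 + s ^ 2) ^ 2 := (one_mul _).symm
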